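/- Unbiasedness of SHAP-IQ: let d ≥ 1, let ν : Finset (Fin d) → ℝ be a game, let m : ℕ → ℝ be weights, let S ⊆ Fin d be nonempty, and let k₀ be a natural number with 2k₀ ≤ d; set 𝒯 := {T ⊆ Fin d : k₀ ≤ |T| ≤ d − k₀}. Let p : Finset (Fin d) → ℝ satisfy p(T) > 0 for all T ∈ 𝒯 and Σ_{T ∈ 𝒯} p(T) = 1, and set c := Σ_{T ⊆ Fin d, T ∉ 𝒯} ν₀(T) · γ(|T|, |T ∩ S|). Then for every K ≥ 1, Σ_{τ : Fin K → Finset (Fin d), τ(k) ∈ 𝒯 for all k} (Π_{k} p(τ(k))) · ( c + (1/K) Σ_{k=1}^{K} ν₀(τ(k)) · γ(|τ(k)|, |τ(k) ∩ S|) / p(τ(k)) ) = I^m(S), i.e. the expected value of the SHAP-IQ estimator over K i.i.d. samples drawn from p equals the cardinal interaction index I^m(S) := Σ_{T ⊆ (Fin d) \ S} m(|T|) δ_S^ν(T). -/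
import Mathlib


/-- The sampling region `𝒯_{k₀} = {T ⊆ Fin d : k₀ ≤ |T| ≤ d − k₀}` of SHAP-IQ. -/
def shapIQRegion (d k₀ : ℕ) : Finset (Finset (Fin d)) :=
  (Finset.univ : Finset (Fin d)).powerset.filter fun T => k₀ ≤ T.card ∧ T.card ≤ d - k₀

open Finset

/-- Alternating sum over the powerset of a nonempty set vanishes. -/
lemma alt_sum_zero {α : Type*} [DecidableEq α] {S : Finset α} (hS : S.Nonempty) :
    ∑ L ∈ S.powerset, (-1 : ℝ) ^ (S.card - L.card) = 0 := by
  have h : ∀ L ∈ S.powerset, (-1 : ℝ) ^ (S.card - L.card) =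
      (-1 : ℝ) ^ S.card * (-1 : ℝ) ^ L.card := by
    intro L hL
    rw [mem_powerset] at hL
    rw [pow_sub₀ (-1 : ℝ) (by norm_num) (card_le_card hL)]
    congr 1
    rw [← inv_pow]
    norm_num
  have hz : ∑ L ∈ S.powerset, (-1 : ℝ) ^ L.card = 0 := by
    have h0 := Finset.sum_powerset_neg_one_pow_card (x := S)
    rw [if_neg hS.ne_empty] at h0
    have : ((∑ L ∈ S.powerset, (-1 : ℤ) ^ L.card : ℤ) : ℝ) = 0 := by rw [h0]; norm_num
    push_cast at this
    exact this
  rw [Finset.sum_congr rfl h, ← Finset.mul_sum, hz, mul_zero]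

/-- Reindexing the sum over all subsets via `W ↦ (W \ S, W ∩ S)`. -/
lemma reindex_lemma {d : ℕ} (S : Finset (Fin d)) (m : ℕ → ℝ) (F : Finset (Fin d) → ℝ) :
    ∑ T ∈ ((Finset.univ : Finset (Fin d)) \ S).powerset, ∑ L ∈ S.powerset,
      (-1 : ℝ) ^ (S.card - L.card) * m T.card * F (T ∪ L) =
    ∑ W ∈ (Finset.univ : Finset (Fin d)).powerset,
      (-1 : ℝ) ^ (S.card - (W ∩ S).card) * m (W.card - (W ∩ S).card) * F W := by
  rw [← Finset.sum_product']
  refine Finset.sum_nbij' (fun x => x.1 ∪ x.2) (fun W => (W \ S, W ∩ S)) ?_ ?_ ?_ ?_ ?_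
  · intro a _; simp
  · intro W _
    simp only [Finset.mem_product, Finset.mem_powerset]
    exact ⟨Finset.sdiff_subset_sdiff (Finset.subset_univ W) le_rfl, Finset.inter_subset_right⟩
  · rintro ⟨T, L⟩ ha
    simp only [Finset.mem_product, Finset.mem_powerset] at ha
    obtain ⟨hT, hL⟩ := ha
    have hTS : T ∩ S = ∅ := by
      rw [← Finset.disjoint_iff_inter_eq_empty]
      exact Finset.disjoint_of_subset_left hT Finset.sdiff_disjoint
    have h1 : (T ∪ L) \ S = T := by
      rw [Finset.union_sdiff_distrib, Finset.sdiff_eq_empty_iff_subset.mpr hL,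
        Finset.union_empty, Finset.sdiff_eq_self_iff_disjoint]
      exact Finset.disjoint_iff_inter_eq_empty.mpr hTS
    have h2 : (T ∪ L) ∩ S = L := by
      rw [Finset.union_inter_distrib_right, hTS, Finset.empty_union,
        Finset.inter_eq_left.mpr hL]
    simp [h1, h2]
  · intro W _
    simp [Finset.sdiff_union_inter]
  · rintro ⟨T, L⟩ ha
    simp only [Finset.mem_product, Finset.mem_powerset] at ha
    obtain ⟨hT, hL⟩ := ha
    have hTS : Disjoint T S :=
      Finset.disjoint_of_subset_left hT Finset.sdiff_disjoint
    have h2 : (T ∪ L) ∩ S = L := by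
      rw [Finset.union_inter_distrib_right, Finset.disjoint_iff_inter_eq_empty.mp hTS,
        Finset.empty_union, Finset.inter_eq_left.mpr hL]
    have hcard : (T ∪ L).card = T.card + L.card :=
      Finset.card_union_of_disjoint (Finset.disjoint_of_subset_right hL hTS)
    simp [h2, hcard]

/-- Summing a product measure times a single-coordinate function over the pi-set. -/
lemma sum_piFinset_mul {ι α : Type*} [Fintype ι] [DecidableEq ι] [DecidableEq α]
    (s : Finset α) (p h : α → ℝ) (hp : ∑ a ∈ s, p a = 1) (k : ι) :
    ∑ τ ∈ Fintype.piFinset (fun _ : ι => s), (∏ j, p (τ j)) * h (τ k) =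
      ∑ a ∈ s, p a * h a := by
  have key : ∀ τ : ι → α, (∏ j, p (τ j)) * h (τ k) =
      ∏ j, (fun j a => p a * (if k = j then h a else 1)) j (τ j) := by
    intro τ
    simp only
    rw [Finset.prod_mul_distrib, Finset.prod_ite_eq, if_pos (Finset.mem_univ k)]
  rw [Finset.sum_congr rfl fun τ _ => key τ]
  rw [← Finset.prod_univ_sum (fun _ : ι => s) (fun j a => p a * (if k = j then h a else 1))]
  have hsj : ∀ j : ι, (∑ a ∈ s, p a * (if k = j then h a else 1)) =
      if k = j then ∑ a ∈ s, p a * h a else 1 := by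
    intro j
    split_ifs with hj
    · simp
    · simp [hp]
  rw [Finset.prod_congr rfl (fun j _ => hsj j), Finset.prod_ite_eq,
    if_pos (Finset.mem_univ k)]

/-- Unbiasedness of SHAP-IQ (part of Theorem 2 of SHAP-IQ): the expectation of the
SHAP-IQ estimator over `K` i.i.d. samples from `p` equals the cardinal interaction
index `I^m(S)`. -/
theorem shapiq_unbiased
    (d k₀ : ℕ) (hd : 1 ≤ d) (hk : 2 * k₀ ≤ d)
    (ν : Finset (Fin d) → ℝ) (m : ℕ → ℝ) (S : Finset (Fin d)) (hS : S.Nonempty)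
    (p : Finset (Fin d) → ℝ)
    (hpos : ∀ T ∈ shapIQRegion d k₀, 0 < p T)
    (hsum : ∑ T ∈ shapIQRegion d k₀, p T = 1)
    (K : ℕ) (hK : 1 ≤ K) :
    let ν₀ : Finset (Fin d) → ℝ := fun T => ν T - ν ∅
    let γ : ℕ → ℕ → ℝ := fun t k => (-1 : ℝ) ^ (S.card - k) * m (t - k)
    let c : ℝ := ∑ T ∈ (Finset.univ : Finset (Fin d)).powerset.filter
        (fun T => T ∉ shapIQRegion d k₀), ν₀ T * γ T.card (T ∩ S).card
    ∑ τ ∈ (Finset.univ : Finset (Fin K → Finset (Fin d))).filter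
        (fun τ => ∀ k, τ k ∈ shapIQRegion d k₀),
      (∏ k, p (τ k)) *
        (c + (1 / (K : ℝ)) *
          ∑ k, ν₀ (τ k) * γ (τ k).card ((τ k) ∩ S).card / p (τ k)) =
    ∑ T ∈ ((Finset.univ : Finset (Fin d)) \ S).powerset,
      m T.card * ∑ L ∈ S.powerset, (-1 : ℝ) ^ (S.card - L.card) * ν (T ∪ L) := by
  intro ν₀ γ c
  set R := shapIQRegion d k₀ with hR
  set g : Finset (Fin d) → ℝ := fun T => ν₀ T * γ T.card (T ∩ S).card with hg
  -- Step 0: the filtered function set is piFinset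
  have hfilt : (Finset.univ : Finset (Fin K → Finset (Fin d))).filter
      (fun τ => ∀ k, τ k ∈ R) = Fintype.piFinset (fun _ : Fin K => R) := by
    ext τ; simp [Fintype.mem_piFinset]
  have hKne : (K : ℝ) ≠ 0 := Nat.cast_ne_zero.mpr (by omega)
  -- Step A : LHS = c + ∑_{T ∈ R} g T
  have stepA : ∑ τ ∈ (Finset.univ : Finset (Fin K → Finset (Fin d))).filter
      (fun τ => ∀ k, τ k ∈ R),
      (∏ k, p (τ k)) *
        (c + (1 / (K : ℝ)) * ∑ k, g (τ k) / p (τ k)) = c + ∑ T ∈ R, g T := by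
    rw [hfilt]
    have hsum1 : ∑ τ ∈ Fintype.piFinset (fun _ : Fin K => R), ∏ j, p (τ j) = 1 := by
      rw [← Finset.prod_univ_sum]
      simp [hsum]
    simp_rw [mul_add, Finset.sum_add_distrib, mul_comm (∏ k, p _) c, ← Finset.mul_sum,
      hsum1, mul_one]
    congr 1
    have expand : ∀ τ : Fin K → Finset (Fin d),
        (∏ j, p (τ j)) * ((1 / (K : ℝ)) * ∑ k, g (τ k) / p (τ k)) =
        ∑ k : Fin K, (1 / (K : ℝ)) * ((∏ j, p (τ j)) * (g (τ k) / p (τ k))) := by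
      intro τ
      rw [Finset.mul_sum, Finset.mul_sum]
      exact Finset.sum_congr rfl fun k _ => by ring
    rw [Finset.sum_congr rfl fun τ _ => expand τ, Finset.sum_comm]
    have inner : ∀ k : Fin K, ∑ τ ∈ Fintype.piFinset (fun _ : Fin K => R),
        (∏ j, p (τ j)) * (g (τ k) / p (τ k)) = ∑ T ∈ R, g T := by
      intro k
      rw [sum_piFinset_mul R p (fun a => g a / p a) hsum k]
      refine Finset.sum_congr rfl fun T hT => ?_
      rw [mul_comm]
      exact div_mul_cancel₀ _ (hpos T hT).ne'
    have : ∀ k : Fin K, ∑ τ ∈ Fintype.piFinset (fun _ : Fin K => R),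
        (1 / (K : ℝ)) * ((∏ j, p (τ j)) * (g (τ k) / p (τ k))) =
        (1 / (K : ℝ)) * ∑ T ∈ R, g T := by
      intro k
      rw [← Finset.mul_sum, inner k]
    rw [Finset.sum_congr rfl fun k _ => this k, Finset.sum_const, Finset.card_univ,
      Fintype.card_fin, nsmul_eq_mul, ← mul_assoc, mul_one_div, div_self hKne, one_mul]
  rw [stepA]
  -- Step B : c + ∑_{T ∈ R} g T = ∑ over all subsets of g
  have hRfilt : R = (Finset.univ : Finset (Fin d)).powerset.filter (fun T => T ∈ R) := by
    ext T; simp [hR, shapIQRegion]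
  have stepB : c + ∑ T ∈ R, g T =
      ∑ W ∈ (Finset.univ : Finset (Fin d)).powerset, g W := by
    rw [add_comm]
    nth_rewrite 1 [hRfilt]
    exact Finset.sum_filter_add_sum_filter_not _ _ _
  rw [stepB]
  -- Step C : combinatorial identity
  have hzero : ∑ W ∈ (Finset.univ : Finset (Fin d)).powerset,
      (-1 : ℝ) ^ (S.card - (W ∩ S).card) * m (W.card - (W ∩ S).card) * ν ∅ = 0 := by
    rw [← reindex_lemma S m (fun _ => ν ∅)]
    refine Finset.sum_eq_zero fun T _ => ?_
    have h1 : ∀ L ∈ S.powerset, (-1 : ℝ) ^ (S.card - L.card) * m T.card * ν ∅ =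
        ((-1 : ℝ) ^ (S.card - L.card)) * (m T.card * ν ∅) := fun L _ => by ring
    rw [Finset.sum_congr rfl h1, ← Finset.sum_mul, alt_sum_zero hS, zero_mul]
  have hrhs : ∑ T ∈ ((Finset.univ : Finset (Fin d)) \ S).powerset,
      m T.card * ∑ L ∈ S.powerset, (-1 : ℝ) ^ (S.card - L.card) * ν (T ∪ L) =
      ∑ W ∈ (Finset.univ : Finset (Fin d)).powerset,
        (-1 : ℝ) ^ (S.card - (W ∩ S).card) * m (W.card - (W ∩ S).card) * ν W := by
    rw [← reindex_lemma S m ν]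
    refine Finset.sum_congr rfl fun T _ => ?_
    rw [Finset.mul_sum]
    exact Finset.sum_congr rfl fun L _ => by ring
  rw [hrhs]
  rw [← sub_zero (∑ W ∈ (Finset.univ : Finset (Fin d)).powerset,
    (-1 : ℝ) ^ (S.card - (W ∩ S).card) * m (W.card - (W ∩ S).card) * ν W), ← hzero,
    ← Finset.sum_sub_distrib]
  refine Finset.sum_congr rfl fun W _ => ?_
  simp only [hg, ν₀, γ]
  ring
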